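/- Let W : X → P(Y) be a channel with cost function ρ : X → [0,∞)^ℓ and α ∈ (0,∞). Let Γ be the set of feasible cost constraints, i.e., Γ = {c ∈ [0,∞)^ℓ : ∃ input distribution P with E_P[ρ] ≤ c}, and for c ∈ Γ let C_{α,W}(c) = sup{I_α(P;W) : E_P[ρ] ≤ c}. Then for every c in the interior of Γ, C_{α,W}(c) = inf_{λ ∈ [0,∞)^ℓ} [C^λ_{α,W} + λ·c]; and if in addition C_{α,W}(c) < ∞, then the set of λ ∈ [0,∞)^ℓ achieving this infimum and satisfying C_{α,W}(c) + λ·(c̃−c) ≥ C_{α,W}(c̃) for all c̃ ∈ [0,∞)^ℓ is a nonempty, convex, compact subset of [0,∞)^ℓ. -/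

import Mathlib

open MeasureTheory Filter Set
open scoped ENNReal NNReal Classical

noncomputable section

namespace Augustin

/-- A probability mass function on `X` that is nonzero only on a finite set:
an *input distribution*. -/
structure FinPMF (X : Type*) where
  p : X → ℝ
  supp : Finset X
  nonneg : ∀ x, 0 ≤ p x
  mem_supp : ∀ x, x ∈ supp ↔ p x ≠ 0
  sum_one : ∑ x ∈ supp, p x = 1

variable {X : Type*} {Y : Type*} [MeasurableSpace Y]

/-- The Kullback–Leibler divergence `D_1(μ‖ν)` (the order one Rényi divergence),
with value `⊤` when `μ` is not absolutely continuous w.r.t. `ν` or the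
log-likelihood ratio is not integrable. -/
def KL (μ ν : Measure Y) : EReal :=
  if μ ≪ ν ∧ Integrable (fun y => Real.log ((μ.rnDeriv ν y).toReal)) μ then
    ((∫ y, Real.log ((μ.rnDeriv ν y).toReal) ∂μ : ℝ) : EReal)
  else ⊤

/-- The order `α` Rényi divergence `D_α(μ‖ν)`, computed via the reference measure `μ + ν`. -/
def RD (α : ℝ) (μ ν : Measure Y) : EReal :=
  if α = 1 then KL μ ν
  else (((α - 1)⁻¹ : ℝ) : EReal) *
    ENNReal.log (∫⁻ y, μ.rnDeriv (μ + ν) y ^ α * ν.rnDeriv (μ + ν) y ^ (1 - α) ∂(μ + ν))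

/-- The order `α` tilted probability measure `W_α^Q` of `μ` and `ν`,
`dW_α^Q/dρ = e^{(1-α)D_α(μ‖ν)} (dμ/dρ)^α (dν/dρ)^{1-α}`. -/
def tilted (α : ℝ) (μ ν : Measure Y) : Measure Y :=
  (μ + ν).withDensity fun y =>
    ENNReal.ofReal (Real.exp ((1 - α) * (RD α μ ν).toReal)) *
      (μ.rnDeriv (μ + ν) y ^ α * ν.rnDeriv (μ + ν) y ^ (1 - α))

/-- The order `α` conditional Rényi divergence `D_α(W‖Q|P) = ∑_x P(x) D_α(W(x)‖Q)`. -/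
def condRD (α : ℝ) (W : X → Measure Y) (Q : Measure Y) (P : FinPMF X) : EReal :=
  ∑ x ∈ P.supp, (P.p x : EReal) * RD α (W x) Q

/-- The order `α` conditional Rényi divergence between two channels,
`D_α(V‖W|P) = ∑_x P(x) D_α(V(x)‖W(x))`. -/
def condRDch (α : ℝ) (V W : X → Measure Y) (P : FinPMF X) : EReal :=
  ∑ x ∈ P.supp, (P.p x : EReal) * RD α (V x) (W x)

/-- The order `α` Augustin information `I_α(P;W) = inf_{Q ∈ P(Y)} D_α(W‖Q|P)`. -/
def AInfo (α : ℝ) (W : X → Measure Y) (P : FinPMF X) : EReal :=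
  ⨅ Q : ProbabilityMeasure Y, condRD α W (Q : Measure Y) P

/-- `q_{1,P} = ∑_x P(x) W(x)`. -/
def q1 (W : X → Measure Y) (P : FinPMF X) : Measure Y :=
  ∑ x ∈ P.supp, ENNReal.ofReal (P.p x) • W x

/-- The order `α` Augustin operator `A_α^P(Q) = ∑_x P(x) W_α^Q(x)`. -/
def Aop (α : ℝ) (W : X → Measure Y) (P : FinPMF X) (Q : Measure Y) : Measure Y :=
  ∑ x ∈ P.supp, ENNReal.ofReal (P.p x) • tilted α (W x) Q

/-- The order `α` mean measure `μ_{α,P}`,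
`dμ_{α,P}/dρ = (∑_x P(x)(dW(x)/dρ)^α)^{1/α}` with `ρ = q_{1,P}`. -/
def meanM (α : ℝ) (W : X → Measure Y) (P : FinPMF X) : Measure Y :=
  (q1 W P).withDensity fun y =>
    (∑ x ∈ P.supp, ENNReal.ofReal (P.p x) * (W x).rnDeriv (q1 W P) y ^ α) ^ (1 / α)

/-- The order `α` Rényi mean `q^G_{α,P} = μ_{α,P}/μ_{α,P}(Y)`. -/
def renyiMean (α : ℝ) (W : X → Measure Y) (P : FinPMF X) : Measure Y :=
  (meanM α W P Set.univ)⁻¹ • meanM α W P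

/-- The total variation distance `‖μ − ν‖`. -/
def tvDist (μ ν : Measure Y) : ℝ≥0∞ :=
  ∫⁻ y, ENNReal.ofReal |(μ.rnDeriv (μ + ν) y).toReal - (ν.rnDeriv (μ + ν) y).toReal| ∂(μ + ν)

/-- The Shannon entropy `H(P) = ∑_x P(x) ln(1/P(x))` of an input distribution. -/
def entropy (P : FinPMF X) : ℝ := ∑ x ∈ P.supp, P.p x * Real.log (P.p x)⁻¹

/-- The joint probability measure `P ⋉ W` on `X × Y`. -/
def jointM [MeasurableSpace X] (W : X → Measure Y) (P : FinPMF X) : Measure (X × Y) :=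
  ∑ x ∈ P.supp, ENNReal.ofReal (P.p x) • (W x).map (fun y => (x, y))

/-- The product probability measure `P ⊗ Q` on `X × Y`. -/
def prodM [MeasurableSpace X] (P : FinPMF X) (Q : Measure Y) : Measure (X × Y) :=
  ∑ x ∈ P.supp, ENNReal.ofReal (P.p x) • Q.map (fun y => (x, y))

/-- The order `α` Rényi information `I^G_α(P;W) = inf_{Q ∈ P(Y)} D_α(P⋉W‖P⊗Q)`. -/
def RGInfo [MeasurableSpace X] (α : ℝ) (W : X → Measure Y) (P : FinPMF X) : EReal :=
  ⨅ Q : ProbabilityMeasure Y, RD α (jointM W P) (prodM P (Q : Measure Y))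

/-- Kullback–Leibler divergence `D_1(P‖U) = ∑_x P(x) ln(P(x)/U(x))`
between finitely supported pmfs. -/
def klPMF (P U : FinPMF X) : EReal :=
  if ∀ x, 0 < P.p x → 0 < U.p x then
    ((∑ x ∈ P.supp, P.p x * Real.log (P.p x / U.p x) : ℝ) : EReal)
  else ⊤

/-- `λ · c` for vectors in `ℝ^ℓ`. -/
def dotl {ℓ : ℕ} (lam c : Fin ℓ → ℝ) : ℝ := ∑ i, lam i * c i

/-- `λ · E_P[ρ]` for a cost function `ρ`. -/
def epCost {ℓ : ℕ} (cost : X → Fin ℓ → ℝ) (lam : Fin ℓ → ℝ) (P : FinPMF X) : ℝ :=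
  ∑ x ∈ P.supp, P.p x * dotl lam (cost x)

/-- `E_P[ρ]` as a vector in `ℝ^ℓ`. -/
def epVec {ℓ : ℕ} (cost : X → Fin ℓ → ℝ) (P : FinPMF X) : Fin ℓ → ℝ :=
  fun i => ∑ x ∈ P.supp, P.p x * cost x i

/-- The order `α` Augustin–Legendre information
`I^λ_α(P;W) = I_α(P;W) − λ·E_P[ρ]`. -/
def ALinfo {ℓ : ℕ} (α : ℝ) (W : X → Measure Y) (cost : X → Fin ℓ → ℝ)
    (lam : Fin ℓ → ℝ) (P : FinPMF X) : EReal :=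
  AInfo α W P - ((epCost cost lam P : ℝ) : EReal)

/-- The order `α` Augustin–Legendre capacity `C^λ_{α,W} = sup_P I^λ_α(P;W)`. -/
def ALcap {ℓ : ℕ} (α : ℝ) (W : X → Measure Y) (cost : X → Fin ℓ → ℝ)
    (lam : Fin ℓ → ℝ) : EReal :=
  ⨆ P : FinPMF X, ALinfo α W cost lam P

/-- The cost constrained Augustin capacity `C_{α,W}(c) = sup {I_α(P;W) : E_P[ρ] ≤ c}`
(equal to `⊥` when the constraint is infeasible). -/
def costCap {ℓ : ℕ} (α : ℝ) (W : X → Measure Y) (cost : X → Fin ℓ → ℝ)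
    (c : Fin ℓ → ℝ) : EReal :=
  ⨆ P ∈ {P : FinPMF X | ∀ i, epVec cost P i ≤ c i}, AInfo α W P


variable {X : Type*} {Y : Type*} [MeasurableSpace Y]

lemma KL_nonneg (μ ν : Measure Y) [IsProbabilityMeasure μ] [IsProbabilityMeasure ν] :
    0 ≤ KL μ ν := by
  rw [KL]
  split_ifs with h
  · obtain ⟨hac, hint⟩ := h
    refine EReal.coe_nonneg.2 ?_
    have hpos : ∀ᵐ y ∂μ, 0 < μ.rnDeriv ν y := Measure.rnDeriv_pos hac
    have hlt : ∀ᵐ y ∂μ, μ.rnDeriv ν y < ⊤ := hac.ae_le (Measure.rnDeriv_lt_top μ ν)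
    have hmeas : Measurable fun y => ((μ.rnDeriv ν y)⁻¹).toReal :=
      (Measure.measurable_rnDeriv μ ν).inv.ennreal_toReal
    have hlint : ∫⁻ y, (μ.rnDeriv ν y)⁻¹ ∂μ ≤ 1 := by
      rw [← MeasureTheory.lintegral_rnDeriv_mul hac
        (show AEMeasurable (fun y => (μ.rnDeriv ν y)⁻¹) ν from
          (Measure.measurable_rnDeriv μ ν).inv.aemeasurable)]
      calc ∫⁻ y, μ.rnDeriv ν y * (μ.rnDeriv ν y)⁻¹ ∂ν ≤ ∫⁻ _, 1 ∂ν :=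
            lintegral_mono fun y => ENNReal.mul_inv_le_one _
        _ = 1 := by simp
    have hii : Integrable (fun y => ((μ.rnDeriv ν y)⁻¹).toReal) μ := by
      refine ⟨hmeas.aestronglyMeasurable, ?_⟩
      refine lt_of_le_of_lt (lintegral_mono fun y => ?_) (lt_of_le_of_lt hlint ?_)
      · show ‖((μ.rnDeriv ν y)⁻¹).toReal‖ₑ ≤ (μ.rnDeriv ν y)⁻¹
        rw [Real.enorm_eq_ofReal ENNReal.toReal_nonneg]
        exact ENNReal.ofReal_toReal_le
      · exact ENNReal.one_lt_top
    have haeeq : (fun y => Real.exp (-(Real.log ((μ.rnDeriv ν y).toReal))))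
        =ᵐ[μ] fun y => ((μ.rnDeriv ν y)⁻¹).toReal := by
      filter_upwards [hpos, hlt] with y hy1 hy2
      have h0 : (μ.rnDeriv ν y).toReal ≠ 0 :=
        (ENNReal.toReal_pos hy1.ne' hy2.ne).ne'
      rw [Real.exp_neg, Real.exp_log (ENNReal.toReal_pos hy1.ne' hy2.ne),
        ENNReal.toReal_inv]
    have hgi : Integrable ((Real.exp ∘ fun y => -Real.log ((μ.rnDeriv ν y).toReal))) μ :=
      hii.congr haeeq.symm
    have hJ := convexOn_exp.map_integral_le (Real.continuous_exp.continuousOn) isClosed_univ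
      (Filter.Eventually.of_forall fun _ => Set.mem_univ _) hint.neg hgi
    have hle1 : ∫ y, Real.exp (-Real.log ((μ.rnDeriv ν y).toReal)) ∂μ ≤ 1 := by
      rw [integral_congr_ae haeeq]
      rw [integral_eq_lintegral_of_nonneg_ae
        (Filter.Eventually.of_forall fun y => ENNReal.toReal_nonneg)
        hmeas.aestronglyMeasurable]
      have : ∫⁻ y, ENNReal.ofReal ((μ.rnDeriv ν y)⁻¹).toReal ∂μ ≤ 1 :=
        le_trans (lintegral_mono fun y => ENNReal.ofReal_toReal_le) hlint
      calc (∫⁻ y, ENNReal.ofReal ((μ.rnDeriv ν y)⁻¹).toReal ∂μ).toReal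
          ≤ (1 : ℝ≥0∞).toReal := ENNReal.toReal_mono ENNReal.one_ne_top this
        _ = 1 := by simp
    simp only [Pi.neg_apply] at hJ
    rw [integral_neg] at hJ
    have h2 := le_trans hJ hle1
    rw [Real.exp_le_one_iff, neg_nonpos] at h2
    exact h2
  · exact le_top

lemma pointwise_holder {a b : ℝ≥0∞} {α : ℝ} (hα : 1 < α) (ha : a ≠ ⊤) (hb : b ≠ ⊤)
    (hab : b = 0 → a = 0) :
    a ≤ (a ^ α * b ^ (1 - α)) ^ (1/α) * b ^ ((α-1)/α) := by
  have hα0 : (0:ℝ) < α := by linarith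
  rcases eq_or_ne b 0 with rfl | hb0
  · rw [hab rfl]; exact bot_le
  · have hatop : a ^ α ≠ ⊤ := ENNReal.rpow_ne_top_of_nonneg hα0.le ha
    have hbtop : b ^ (1 - α) ≠ ⊤ := by
      rw [Ne, ENNReal.rpow_eq_top_iff]
      push_neg
      exact ⟨fun h => absurd h hb0, fun h => absurd h hb⟩
    have h1 : (a ^ α * b ^ (1-α)) ^ (1/α) = a * b ^ ((1-α)/α) := by
      rw [ENNReal.mul_rpow_of_ne_top hatop hbtop, ← ENNReal.rpow_mul, ← ENNReal.rpow_mul,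
        mul_one_div, div_self hα0.ne', ENNReal.rpow_one, mul_one_div]
    rw [h1, mul_assoc, ← ENNReal.rpow_add _ _ hb0 hb]
    have h2 : (1-α)/α + (α-1)/α = 0 := by ring
    rw [h2, ENNReal.rpow_zero, mul_one]

lemma RD_nonneg {α : ℝ} (hα : 0 < α) (μ ν : Measure Y)
    [IsProbabilityMeasure μ] [IsProbabilityMeasure ν] : 0 ≤ RD α μ ν := by
  rw [RD]
  split_ifs with h1
  · exact KL_nonneg μ ν
  set ρ := μ + ν with hρ
  have hμρ : μ ≪ ρ := Measure.absolutelyContinuous_of_le (Measure.le_add_right le_rfl)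
  have hνρ : ν ≪ ρ := Measure.absolutelyContinuous_of_le (Measure.le_add_left le_rfl)
  have hf1 : ∫⁻ y, μ.rnDeriv ρ y ∂ρ = 1 := by
    rw [Measure.lintegral_rnDeriv hμρ]; simp
  have hg1 : ∫⁻ y, ν.rnDeriv ρ y ∂ρ = 1 := by
    rw [Measure.lintegral_rnDeriv hνρ]; simp
  have hfm : AEMeasurable (μ.rnDeriv ρ) ρ := (Measure.measurable_rnDeriv μ ρ).aemeasurable
  have hgm : AEMeasurable (ν.rnDeriv ρ) ρ := (Measure.measurable_rnDeriv ν ρ).aemeasurable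
  rcases lt_or_gt_of_ne h1 with hlt | hgt
  · have hle : ∫⁻ y, μ.rnDeriv ρ y ^ α * ν.rnDeriv ρ y ^ (1 - α) ∂ρ ≤ 1 := by
      calc ∫⁻ y, μ.rnDeriv ρ y ^ α * ν.rnDeriv ρ y ^ (1 - α) ∂ρ
          ≤ (∫⁻ y, μ.rnDeriv ρ y ∂ρ) ^ α * (∫⁻ y, ν.rnDeriv ρ y ∂ρ) ^ (1-α) :=
            ENNReal.lintegral_mul_norm_pow_le hfm hgm hα.le (by linarith) (by ring)
        _ = 1 := by rw [hf1, hg1]; simp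
    have hlog : ENNReal.log (∫⁻ y, μ.rnDeriv ρ y ^ α * ν.rnDeriv ρ y ^ (1 - α) ∂ρ) ≤ 0 :=
      ENNReal.log_le_zero_iff.2 hle
    set t := ENNReal.log (∫⁻ y, μ.rnDeriv ρ y ^ α * ν.rnDeriv ρ y ^ (1 - α) ∂ρ)
    have h2 : (0:EReal) ≤ (((1-α)⁻¹ : ℝ) : EReal) * (-t) :=
      mul_nonneg (by exact_mod_cast inv_nonneg.2 (by linarith)) (by simpa using EReal.neg_le_neg_iff.2 hlog)
    calc (0:EReal) ≤ (((1-α)⁻¹ : ℝ) : EReal) * (-t) := h2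
      _ = (((α-1)⁻¹ : ℝ) : EReal) * t := by
          rw [show ((α-1)⁻¹ : ℝ) = -((1-α)⁻¹ : ℝ) by rw [neg_inv, neg_sub],
            EReal.coe_neg, EReal.neg_mul, mul_comm, EReal.neg_mul, mul_comm]
  · set F : Y → ℝ≥0∞ := fun y => μ.rnDeriv ρ y ^ α * ν.rnDeriv ρ y ^ (1-α) with hF
    have hFm : Measurable F :=
      ((Measure.measurable_rnDeriv μ ρ).pow_const α).mul
        ((Measure.measurable_rnDeriv ν ρ).pow_const (1-α))
    have h1le : (1:ℝ≥0∞) ≤ ∫⁻ y, F y ∂ρ := by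
      by_cases hS : ρ {y | ν.rnDeriv ρ y = 0 ∧ μ.rnDeriv ρ y ≠ 0} = 0
      · have hae : ∀ᵐ y ∂ρ, μ.rnDeriv ρ y ≤ F y ^ (1/α) * ν.rnDeriv ρ y ^ ((α-1)/α) := by
          have h1 : ∀ᵐ y ∂ρ, μ.rnDeriv ρ y < ⊤ := Measure.rnDeriv_lt_top μ ρ
          have h2 : ∀ᵐ y ∂ρ, ν.rnDeriv ρ y < ⊤ := Measure.rnDeriv_lt_top ν ρ
          have h3 : ∀ᵐ y ∂ρ, ¬(ν.rnDeriv ρ y = 0 ∧ μ.rnDeriv ρ y ≠ 0) := by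
            rw [ae_iff]; simpa using hS
          filter_upwards [h1, h2, h3] with y hy1 hy2 hy3
          refine pointwise_holder hgt hy1.ne hy2.ne fun hb => ?_
          by_contra hne
          exact hy3 ⟨hb, hne⟩
        have hstep : (1:ℝ≥0∞) ≤ ∫⁻ y, F y ^ (1/α) * ν.rnDeriv ρ y ^ ((α-1)/α) ∂ρ := by
          calc (1:ℝ≥0∞) = ∫⁻ y, μ.rnDeriv ρ y ∂ρ := hf1.symm
            _ ≤ _ := lintegral_mono_ae hae
        have hconj : Real.HolderConjugate α (α/(α-1)) :=
          (Real.holderConjugate_iff_eq_conjExponent hgt).2 rfl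
        have hH := ENNReal.lintegral_mul_le_Lp_mul_Lq ρ hconj
          ((hFm.pow_const (1/α)).aemeasurable)
          (((Measure.measurable_rnDeriv ν ρ).pow_const ((α-1)/α)).aemeasurable)
        simp only [Pi.mul_apply] at hH
        have he1 : ∀ y, (F y ^ (1/α)) ^ α = F y := fun y => by
          rw [← ENNReal.rpow_mul, one_div, inv_mul_cancel₀ (by linarith : α ≠ 0),
            ENNReal.rpow_one]
        have he2 : ∀ y, (ν.rnDeriv ρ y ^ ((α-1)/α)) ^ (α/(α-1)) = ν.rnDeriv ρ y := fun y => by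
          rw [← ENNReal.rpow_mul, div_mul_div_comm, mul_comm,
            div_self (show (α*(α-1)) ≠ 0 from (by nlinarith : (0:ℝ) < α*(α-1)).ne'),
            ENNReal.rpow_one]
        simp only [he1, he2, hg1, ENNReal.one_rpow, mul_one] at hH
        have hfin := le_trans hstep hH
        by_contra hnot
        push_neg at hnot
        have : (∫⁻ y, F y ∂ρ) ^ (1/α) < 1 :=
          ENNReal.rpow_lt_one hnot (by positivity)
        exact absurd hfin (not_le.2 this)
      · have hmeasS : MeasurableSet {y | ν.rnDeriv ρ y = 0 ∧ μ.rnDeriv ρ y ≠ 0} := by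
          refine MeasurableSet.inter ?_ ?_
          · exact (Measure.measurable_rnDeriv ν ρ) (measurableSet_singleton 0)
          · exact ((Measure.measurable_rnDeriv μ ρ) (measurableSet_singleton 0)).compl
        calc (1:ℝ≥0∞) ≤ ⊤ * ρ {y | ν.rnDeriv ρ y = 0 ∧ μ.rnDeriv ρ y ≠ 0} := by
              rw [ENNReal.top_mul hS]; exact le_top
          _ = ∫⁻ _ in {y | ν.rnDeriv ρ y = 0 ∧ μ.rnDeriv ρ y ≠ 0}, ⊤ ∂ρ :=
              (setLIntegral_const _ ⊤).symm
          _ ≤ ∫⁻ y in {y | ν.rnDeriv ρ y = 0 ∧ μ.rnDeriv ρ y ≠ 0}, F y ∂ρ := by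
              refine setLIntegral_mono hFm fun y hy => ?_
              obtain ⟨hg0, hf0⟩ := hy
              rw [hF]
              simp only []
              rw [hg0, ENNReal.zero_rpow_of_neg (by linarith), ENNReal.mul_top]
              intro hc
              rw [ENNReal.rpow_eq_zero_iff] at hc
              rcases hc with ⟨h, _⟩ | ⟨_, h⟩
              · exact hf0 h
              · linarith
          _ ≤ ∫⁻ y, F y ∂ρ := setLIntegral_le_lintegral _ _
    have hlog : 0 ≤ ENNReal.log (∫⁻ y, F y ∂ρ) := ENNReal.zero_le_log_iff.2 h1le
    exact mul_nonneg (by exact_mod_cast inv_nonneg.2 (by linarith : (0:ℝ) ≤ α - 1)) hlog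

section Chunk2
variable {X : Type*} {Y : Type*} [MeasurableSpace Y]

lemma FinPMF.p_eq_zero {P : FinPMF X} {x : X} (hx : x ∉ P.supp) : P.p x = 0 := by
  by_contra h; exact hx ((P.mem_supp x).2 h)

lemma ereal_coe_mul_sum {ι : Type*} (s : Finset ι) (t : ℝ) (z : ι → EReal)
    (hz : ∀ i ∈ s, 0 ≤ z i) : (t : EReal) * ∑ i ∈ s, z i = ∑ i ∈ s, (t : EReal) * z i := by
  induction s using Finset.cons_induction with
  | empty => simp
  | cons a s ha ih =>
    rw [Finset.sum_cons, Finset.sum_cons,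
      EReal.left_distrib_of_nonneg (hz a (Finset.mem_cons_self a s))
        (Finset.sum_nonneg fun i hi => hz i (Finset.mem_cons_of_mem hi)),
      ih fun i hi => hz i (Finset.mem_cons_of_mem hi)]

lemma FinPMF.sum_mul_ereal (P : FinPMF X) {s : Finset X} (hs : P.supp ⊆ s) (F : X → EReal) :
    ∑ x ∈ s, (P.p x : EReal) * F x = ∑ x ∈ P.supp, (P.p x : EReal) * F x := by
  refine (Finset.sum_subset hs fun x _ hnx => ?_).symm
  rw [FinPMF.p_eq_zero hnx]
  simp

lemma FinPMF.sum_mul_real (P : FinPMF X) {s : Finset X} (hs : P.supp ⊆ s) (F : X → ℝ) :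
    ∑ x ∈ s, P.p x * F x = ∑ x ∈ P.supp, P.p x * F x := by
  refine (Finset.sum_subset hs fun x _ hnx => ?_).symm
  rw [FinPMF.p_eq_zero hnx, zero_mul]

lemma condRD_nonneg {α : ℝ} (hα : 0 < α) (W : X → Measure Y) [∀ x, IsProbabilityMeasure (W x)]
    (Q : Measure Y) [IsProbabilityMeasure Q] (P : FinPMF X) : 0 ≤ condRD α W Q P :=
  Finset.sum_nonneg fun x _ => mul_nonneg (EReal.coe_nonneg.2 (P.nonneg x)) (RD_nonneg hα _ _)

lemma AInfo_nonneg {α : ℝ} (hα : 0 < α) (W : X → Measure Y) [∀ x, IsProbabilityMeasure (W x)]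
    (P : FinPMF X) : 0 ≤ AInfo α W P :=
  le_iInf fun Q => condRD_nonneg hα W _ P

/-- Mixture of two input distributions. -/
def mix (t : ℝ) (ht0 : 0 ≤ t) (ht1 : t ≤ 1) (P Q : FinPMF X) : FinPMF X where
  p x := t * P.p x + (1-t) * Q.p x
  supp := (P.supp ∪ Q.supp).filter fun x => t * P.p x + (1-t) * Q.p x ≠ 0
  nonneg x := add_nonneg (mul_nonneg ht0 (P.nonneg x)) (mul_nonneg (by linarith) (Q.nonneg x))
  mem_supp x := by
    simp only [Finset.mem_filter, Finset.mem_union, P.mem_supp, Q.mem_supp]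
    constructor
    · rintro ⟨-, h⟩; exact h
    · intro h
      refine ⟨?_, h⟩
      by_contra hcon
      push_neg at hcon
      obtain ⟨h1, h2⟩ := hcon
      apply h
      rw [h1, h2, mul_zero, mul_zero, add_zero]
  sum_one := by
    rw [Finset.sum_filter_ne_zero]
    have h2 : ∑ x ∈ P.supp ∪ Q.supp, P.p x = 1 := by
      rw [← P.sum_one]
      exact (Finset.sum_subset Finset.subset_union_left
        fun x _ hx => FinPMF.p_eq_zero hx).symm
    have h3 : ∑ x ∈ P.supp ∪ Q.supp, Q.p x = 1 := by
      rw [← Q.sum_one]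
      exact (Finset.sum_subset Finset.subset_union_right
        fun x _ hx => FinPMF.p_eq_zero hx).symm
    rw [Finset.sum_add_distrib, ← Finset.mul_sum, ← Finset.mul_sum, h2, h3]
    ring

lemma mix_supp_subset {t : ℝ} {ht0 : 0 ≤ t} {ht1 : t ≤ 1} {P Q : FinPMF X} :
    (mix t ht0 ht1 P Q).supp ⊆ P.supp ∪ Q.supp := Finset.filter_subset _ _

lemma mix_sum_real (t : ℝ) (ht0 : 0 ≤ t) (ht1 : t ≤ 1) (P Q : FinPMF X) (F : X → ℝ) :
    ∑ x ∈ (mix t ht0 ht1 P Q).supp, (mix t ht0 ht1 P Q).p x * F x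
      = t * ∑ x ∈ P.supp, P.p x * F x + (1-t) * ∑ x ∈ Q.supp, Q.p x * F x := by
  rw [← (mix t ht0 ht1 P Q).sum_mul_real mix_supp_subset F]
  show ∑ x ∈ P.supp ∪ Q.supp, (t * P.p x + (1-t) * Q.p x) * F x = _
  rw [← P.sum_mul_real Finset.subset_union_left F, ← Q.sum_mul_real Finset.subset_union_right F,
    Finset.mul_sum, Finset.mul_sum, ← Finset.sum_add_distrib]
  exact Finset.sum_congr rfl fun x _ => by ring

lemma mix_sum_ereal (t : ℝ) (ht0 : 0 ≤ t) (ht1 : t ≤ 1) (P Q : FinPMF X) (F : X → EReal)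
    (hF : ∀ x, 0 ≤ F x) :
    ∑ x ∈ (mix t ht0 ht1 P Q).supp, ((mix t ht0 ht1 P Q).p x : EReal) * F x
      = (t : EReal) * ∑ x ∈ P.supp, (P.p x : EReal) * F x
        + ((1-t : ℝ) : EReal) * ∑ x ∈ Q.supp, (Q.p x : EReal) * F x := by
  rw [← (mix t ht0 ht1 P Q).sum_mul_ereal mix_supp_subset F]
  show ∑ x ∈ P.supp ∪ Q.supp, ((t * P.p x + (1-t) * Q.p x : ℝ) : EReal) * F x = _
  rw [← P.sum_mul_ereal Finset.subset_union_left F, ← Q.sum_mul_ereal Finset.subset_union_right F,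
    ereal_coe_mul_sum _ _ _ (fun x _ => mul_nonneg (EReal.coe_nonneg.2 (P.nonneg x)) (hF x)),
    ereal_coe_mul_sum _ _ _ (fun x _ => mul_nonneg (EReal.coe_nonneg.2 (Q.nonneg x)) (hF x)),
    ← Finset.sum_add_distrib]
  refine Finset.sum_congr rfl fun x _ => ?_
  rw [EReal.coe_add, EReal.right_distrib_of_nonneg
      (EReal.coe_nonneg.2 (mul_nonneg ht0 (P.nonneg x)))
      (EReal.coe_nonneg.2 (mul_nonneg (by linarith) (Q.nonneg x))),
    EReal.coe_mul, EReal.coe_mul, mul_assoc, mul_assoc]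

lemma AInfo_mix {α : ℝ} (hα : 0 < α) (W : X → Measure Y) [∀ x, IsProbabilityMeasure (W x)]
    (t : ℝ) (ht0 : 0 ≤ t) (ht1 : t ≤ 1) (P Q : FinPMF X) :
    (t : EReal) * AInfo α W P + ((1-t : ℝ) : EReal) * AInfo α W Q
      ≤ AInfo α W (mix t ht0 ht1 P Q) := by
  refine le_iInf fun Q' => ?_
  haveI : IsProbabilityMeasure (Q' : Measure Y) := Q'.prop
  have hmix : condRD α W (Q' : Measure Y) (mix t ht0 ht1 P Q)
      = (t : EReal) * condRD α W (Q' : Measure Y) P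
        + ((1-t : ℝ) : EReal) * condRD α W (Q' : Measure Y) Q :=
    mix_sum_ereal t ht0 ht1 P Q _ fun x => RD_nonneg hα _ _
  rw [hmix]
  exact add_le_add
    (mul_le_mul_of_nonneg_left (iInf_le _ Q') (EReal.coe_nonneg.2 ht0))
    (mul_le_mul_of_nonneg_left (iInf_le _ Q') (EReal.coe_nonneg.2 (by linarith)))

lemma epVec_mix {ℓ : ℕ} (cost : X → Fin ℓ → ℝ) (t : ℝ) (ht0 : 0 ≤ t) (ht1 : t ≤ 1)
    (P Q : FinPMF X) (i : Fin ℓ) :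
    epVec cost (mix t ht0 ht1 P Q) i = t * epVec cost P i + (1-t) * epVec cost Q i :=
  mix_sum_real t ht0 ht1 P Q fun x => cost x i

lemma epCost_dotl {ℓ : ℕ} (cost : X → Fin ℓ → ℝ) (lam : Fin ℓ → ℝ) (P : FinPMF X) :
    epCost cost lam P = dotl lam (epVec cost P) := by
  unfold epCost dotl epVec
  simp_rw [Finset.mul_sum]
  rw [Finset.sum_comm]
  exact Finset.sum_congr rfl fun i _ => Finset.sum_congr rfl fun x _ => by ring

lemma dotl_mono {ℓ : ℕ} {lam v w : Fin ℓ → ℝ} (hlam : ∀ i, 0 ≤ lam i) (h : ∀ i, v i ≤ w i) :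
    dotl lam v ≤ dotl lam w :=
  Finset.sum_le_sum fun i _ => mul_le_mul_of_nonneg_left (h i) (hlam i)

lemma dotl_sub {ℓ : ℕ} (lam v w : Fin ℓ → ℝ) : dotl lam (v - w) = dotl lam v - dotl lam w := by
  simp [dotl, mul_sub, Finset.sum_sub_distrib]

lemma dotl_smul_add {ℓ : ℕ} (a b : ℝ) (l₁ l₂ v : Fin ℓ → ℝ) :
    dotl (a • l₁ + b • l₂) v = a * dotl l₁ v + b * dotl l₂ v := by
  simp only [dotl, Pi.add_apply, Pi.smul_apply, smul_eq_mul, Finset.mul_sum,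
    ← Finset.sum_add_distrib]
  exact Finset.sum_congr rfl fun i _ => by ring

lemma epCost_smul_add {ℓ : ℕ} (cost : X → Fin ℓ → ℝ) (a b : ℝ) (l₁ l₂ : Fin ℓ → ℝ)
    (P : FinPMF X) :
    epCost cost (a • l₁ + b • l₂) P = a * epCost cost l₁ P + b * epCost cost l₂ P := by
  simp only [epCost, dotl_smul_add, mul_add, Finset.sum_add_distrib, Finset.mul_sum]
  congr 1 <;> exact Finset.sum_congr rfl fun x _ => by ring

lemma ereal_sub_add_le {a : EReal} {s u : ℝ} (h : s ≤ u) : a ≤ a - (s : EReal) + (u : EReal) := by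
  have h1 : a - (s : EReal) + (u : EReal) = a + ((u - s : ℝ) : EReal) := by
    rw [sub_eq_add_neg, ← EReal.coe_neg, add_assoc, ← EReal.coe_add,
      show -s + u = u - s by ring]
  rw [h1]
  nth_rewrite 1 [← add_zero a]
  exact add_le_add_right (EReal.coe_nonneg.2 (by linarith)) a

lemma ereal_add_coe_le_coe_iff {a : EReal} {d g : ℝ} :
    a + (d : EReal) ≤ (g : EReal) ↔ a ≤ ((g - d : ℝ) : EReal) := by
  induction a using EReal.rec with
  | bot => simp
  | coe x => norm_cast; constructor <;> intro <;> linarith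
  | top =>
    simp only [EReal.top_add_coe]
    simp [top_le_iff, ← EReal.coe_sub]

lemma ereal_sub_add_le_coe_iff {a : EReal} {u v g : ℝ} :
    a - (u : EReal) + (v : EReal) ≤ (g : EReal) ↔ a ≤ ((g - v + u : ℝ) : EReal) := by
  rw [ereal_add_coe_le_coe_iff, sub_eq_add_neg, ← EReal.coe_neg, ereal_add_coe_le_coe_iff]
  norm_num

lemma ereal_le_coe_of_forall {a : EReal} {K : ℝ} (h : ∀ t : ℝ, (t : EReal) ≤ a → t ≤ K) :
    a ≤ (K : EReal) := by
  induction a using EReal.rec with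
  | bot => exact bot_le
  | coe x => exact EReal.coe_le_coe_iff.2 (h x le_rfl)
  | top => exact absurd (h (K+1) le_top) (by linarith)

lemma ereal_le_coe_of_forall_eps {a : EReal} {g : ℝ}
    (h : ∀ ε : ℝ, 0 < ε → a ≤ ((g + ε : ℝ) : EReal)) : a ≤ (g : EReal) := by
  induction a using EReal.rec with
  | bot => exact bot_le
  | coe x =>
    refine EReal.coe_le_coe_iff.2 (le_of_forall_pos_le_add fun ε hε => ?_)
    exact EReal.coe_le_coe_iff.1 (h ε hε)
  | top =>
    have := h 1 one_pos
    rw [top_le_iff] at this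
    exact absurd this (EReal.coe_ne_top _)

lemma AInfo_le_ALinfo_add {ℓ : ℕ} {α : ℝ} (W : X → Measure Y) (cost : X → Fin ℓ → ℝ)
    (P : FinPMF X) (lam : Fin ℓ → ℝ) (hlam : ∀ i, 0 ≤ lam i) {c' : Fin ℓ → ℝ}
    (hP : ∀ i, epVec cost P i ≤ c' i) :
    AInfo α W P ≤ ALinfo α W cost lam P + ((dotl lam c' : ℝ) : EReal) := by
  have h : epCost cost lam P ≤ dotl lam c' := by
    rw [epCost_dotl]; exact dotl_mono hlam hP
  exact ereal_sub_add_le h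

lemma weak_duality {ℓ : ℕ} {α : ℝ} (W : X → Measure Y) (cost : X → Fin ℓ → ℝ)
    (lam : Fin ℓ → ℝ) (hlam : ∀ i, 0 ≤ lam i) (c' : Fin ℓ → ℝ) :
    costCap α W cost c' ≤ ALcap α W cost lam + ((dotl lam c' : ℝ) : EReal) := by
  refine iSup₂_le fun P hP => ?_
  exact le_trans (AInfo_le_ALinfo_add W cost P lam hlam hP)
    (add_le_add_left (le_iSup _ P) _)

end Chunk2


section Chunk3
variable {X : Type*} {Y : Type*} [MeasurableSpace Y]

lemma A_convex {ℓ : ℕ} {α : ℝ} (hα : 0 < α) (W : X → Measure Y)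
    [∀ x, IsProbabilityMeasure (W x)] (cost : X → Fin ℓ → ℝ) :
    Convex ℝ {u : (Fin ℓ → ℝ) × ℝ | ∃ P : FinPMF X,
      (∀ i, epVec cost P i ≤ u.1 i) ∧ (u.2 : EReal) ≤ AInfo α W P} := by
  rintro u ⟨P, hP1, hP2⟩ v ⟨Q, hQ1, hQ2⟩ a b ha hb hab
  have hb' : b = 1 - a := by linarith
  subst hb'
  have ha1 : a ≤ 1 := by linarith
  refine ⟨mix a ha ha1 P Q, fun i => ?_, ?_⟩
  · rw [epVec_mix]
    have h1 : a * epVec cost P i ≤ a * u.1 i := mul_le_mul_of_nonneg_left (hP1 i) ha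
    have h2 : (1-a) * epVec cost Q i ≤ (1-a) * v.1 i := mul_le_mul_of_nonneg_left (hQ1 i) hb
    show _ ≤ a * u.1 i + (1-a) * v.1 i
    linarith
  · show (((a • u + (1-a) • v).2 : ℝ) : EReal) ≤ _
    have h0 : (a • u + (1-a) • v).2 = a * u.2 + (1-a) * v.2 := rfl
    rw [h0]
    refine le_trans ?_ (AInfo_mix hα W a ha ha1 P Q)
    rw [EReal.coe_add, EReal.coe_mul, EReal.coe_mul]
    exact add_le_add (mul_le_mul_of_nonneg_left hP2 (EReal.coe_nonneg.2 ha))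
      (mul_le_mul_of_nonneg_left hQ2 (EReal.coe_nonneg.2 hb))

lemma strong_eps {ℓ : ℕ} {α : ℝ} (hα : 0 < α) (W : X → Measure Y)
    [∀ x, IsProbabilityMeasure (W x)] (cost : X → Fin ℓ → ℝ)
    {c : Fin ℓ → ℝ} {δ γ : ℝ} (hδ : 0 < δ)
    (hball : ∀ c' : Fin ℓ → ℝ, dist c' c < δ → ∃ P : FinPMF X, ∀ i, epVec cost P i ≤ c' i)
    (hγ : costCap α W cost c = (γ : EReal))
    (ε : ℝ) (hε : 0 < ε) :
    ∃ lam : Fin ℓ → ℝ, (∀ i, 0 ≤ lam i) ∧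
      ALcap α W cost lam + ((dotl lam c : ℝ) : EReal) ≤ ((γ + ε : ℝ) : EReal) := by
  obtain ⟨P₀, hP₀⟩ := hball c (by simp [hδ])
  set A : Set ((Fin ℓ → ℝ) × ℝ) := {u | ∃ P : FinPMF X,
    (∀ i, epVec cost P i ≤ u.1 i) ∧ (u.2 : EReal) ≤ AInfo α W P} with hA
  have hAconv : Convex ℝ A := A_convex hα W cost
  have hbA : ((c, γ + ε) : (Fin ℓ → ℝ) × ℝ) ∉ A := by
    rintro ⟨P, h1, h2⟩
    have h3 : ((γ + ε : ℝ) : EReal) ≤ costCap α W cost c :=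
      le_trans h2 (le_iSup₂ (f := fun (P : FinPMF X) (_ : P ∈ {P : FinPMF X | ∀ i,
        epVec cost P i ≤ c i}) => AInfo α W P) P h1)
    rw [hγ] at h3
    have := EReal.coe_le_coe_iff.1 h3
    linarith
  have hU : (Metric.ball c δ) ×ˢ (Set.Iio (0:ℝ)) ⊆ A := by
    rintro u ⟨h1, h2⟩
    obtain ⟨P, hP⟩ := hball u.1 (by rwa [Metric.mem_ball] at h1)
    refine ⟨P, hP, le_trans ?_ (AInfo_nonneg hα W P)⟩
    have : ((u.2 : ℝ) : EReal) ≤ ((0:ℝ) : EReal) := EReal.coe_le_coe_iff.2 (le_of_lt h2)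
    simpa using this
  have hUsub : (Metric.ball c δ) ×ˢ (Set.Iio (0:ℝ)) ⊆ interior A :=
    (Metric.isOpen_ball.prod isOpen_Iio).subset_interior_iff.2 hU
  have hx0 : ((c, (-1:ℝ)) : (Fin ℓ → ℝ) × ℝ) ∈ interior A :=
    hUsub ⟨Metric.mem_ball_self hδ, by norm_num⟩
  obtain ⟨f, hf⟩ := geometric_hahn_banach_open_point (hAconv.interior) isOpen_interior
    (fun h => hbA (interior_subset h))
  have hfA : ∀ u ∈ A, f u ≤ f (c, γ + ε) := by
    intro u hu
    have hseq : ∀ t : ℝ, 0 < t → t ≤ 1 →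
        f (t • ((c, (-1:ℝ)) : (Fin ℓ → ℝ) × ℝ) + (1-t) • u) < f (c, γ + ε) := by
      intro t ht0 ht1
      refine hf _ (hAconv.combo_interior_closure_subset_interior (a := t) (b := 1-t)
        ht0 (by linarith) (by ring) ?_)
      exact Set.add_mem_add (Set.smul_mem_smul_set hx0)
        (Set.smul_mem_smul_set (subset_closure hu))
    have h1 : Filter.Tendsto (fun n : ℕ => (1/(n+1) : ℝ)) Filter.atTop (nhds 0) :=
      tendsto_one_div_add_atTop_nhds_zero_nat
    have hgc : Continuous fun t : ℝ =>
        f (t • ((c, (-1:ℝ)) : (Fin ℓ → ℝ) × ℝ) + (1-t) • u) :=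
      f.continuous.comp ((continuous_id.smul continuous_const).add
        ((continuous_const.sub continuous_id).smul continuous_const))
    have hlim := (hgc.tendsto 0).comp h1
    simp only [Function.comp_def, zero_smul, zero_add, sub_zero, one_smul] at hlim
    refine le_of_tendsto hlim (Filter.Eventually.of_forall fun n => ?_)
    refine (hseq _ (by positivity) ?_).le
    rw [div_le_one (by positivity)]
    linarith [Nat.cast_nonneg (α := ℝ) n]
  set s : ℝ := f ((0 : Fin ℓ → ℝ), (1:ℝ)) with hs
  have hdec : ∀ (v : Fin ℓ → ℝ) (t : ℝ), f (v, t) = f (v, 0) + t * s := by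
    intro v t
    have h3 : ((v, t) : (Fin ℓ → ℝ) × ℝ) = (v, 0) + t • ((0 : Fin ℓ → ℝ), (1:ℝ)) := by
      simp [Prod.ext_iff]
    rw [h3, map_add, _root_.map_smul, smul_eq_mul]
  have hc0A : ∀ t : ℝ, t ≤ 0 → ((c, t) : (Fin ℓ → ℝ) × ℝ) ∈ A := by
    intro t ht
    refine ⟨P₀, hP₀, le_trans ?_ (AInfo_nonneg hα W P₀)⟩
    have : ((t : ℝ) : EReal) ≤ ((0:ℝ) : EReal) := EReal.coe_le_coe_iff.2 ht
    simpa using this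
  have hfb : f (c, γ + ε) = f (c, 0) + (γ+ε) * s := hdec c (γ+ε)
  have hs0 : 0 ≤ s := by
    by_contra hsneg
    push_neg at hsneg
    have ht : min 0 (γ+ε) - 1 ≤ 0 := by
      have := min_le_left 0 (γ+ε); linarith
    have h2 := hfA _ (hc0A _ ht)
    rw [hdec, hfb] at h2
    have h3 : (γ+ε)*s < (min 0 (γ+ε) - 1)*s := by
      refine mul_lt_mul_of_neg_right ?_ hsneg
      have := min_le_right 0 (γ+ε); linarith
    linarith
  have hspos : 0 < s := by
    rcases hs0.lt_or_eq with h | h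
    · exact h
    · exfalso
      have h4 := hf _ hx0
      rw [hdec, hfb, ← h] at h4
      simp at h4
  have hsne : s ≠ 0 := hspos.ne'
  set lam : Fin ℓ → ℝ := fun i => -(f (Pi.single i 1, 0)) / s with hlamdef
  have hφ : ∀ v : Fin ℓ → ℝ, f (v, 0) = ∑ i, v i * f (Pi.single i 1, 0) := by
    intro v
    set φ : (Fin ℓ → ℝ) →ₗ[ℝ] ℝ :=
      (f : (Fin ℓ → ℝ) × ℝ →L[ℝ] ℝ).toLinearMap.comp (LinearMap.inl ℝ (Fin ℓ → ℝ) ℝ) with hφdef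
    have h5 : ∀ w : Fin ℓ → ℝ, φ w = f (w, 0) := fun w => rfl
    have h6 := LinearMap.pi_apply_eq_sum_univ φ v
    rw [h5] at h6
    rw [h6]
    refine Finset.sum_congr rfl fun i _ => ?_
    have hsing : (fun j => if i = j then (1:ℝ) else 0) = Pi.single i 1 := by
      funext j
      rw [Pi.single_apply]
      exact (if_congr eq_comm rfl rfl).symm
    rw [smul_eq_mul, hsing, h5]
  have hlamL : ∀ v : Fin ℓ → ℝ, dotl lam v = -(f (v, 0)) / s := by
    intro v
    rw [dotl, hφ v]
    calc ∑ i, lam i * v i = ∑ i, -(v i * f (Pi.single i 1, 0))/s :=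
        Finset.sum_congr rfl fun i _ => by rw [hlamdef]; ring
      _ = -(∑ i, v i * f (Pi.single i 1, 0))/s := by
        rw [← Finset.sum_div, ← Finset.sum_neg_distrib]
  have hfL : ∀ v : Fin ℓ → ℝ, f (v, 0) = -(dotl lam v) * s := by
    intro v
    rw [hlamL, neg_div, neg_neg, div_mul_cancel₀ _ hsne]
  have hlamnn : ∀ i, 0 ≤ lam i := by
    intro i
    set e : Fin ℓ → ℝ := Pi.single i 1 with he
    have hMsets : ∀ M : ℝ, 0 ≤ M →
        ((c + M • e, (0:ℝ)) : (Fin ℓ → ℝ) × ℝ) ∈ A := by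
      intro M hM
      refine ⟨P₀, fun j => le_trans (hP₀ j) ?_, ?_⟩
      · have h0 : (0:ℝ) ≤ e j := by
          rw [he, Pi.single_apply]
          split_ifs <;> norm_num
        have h0' : 0 ≤ M * e j := mul_nonneg hM h0
        show c j ≤ (c + M • e) j
        rw [Pi.add_apply, Pi.smul_apply, smul_eq_mul]
        linarith
      · have h := AInfo_nonneg hα W P₀
        simpa using h
    have hlin : ∀ M : ℝ, f (c + M • e, 0) = f (c,0) + M * f (e, 0) := by
      intro M
      have h7 : ((c + M • e, (0:ℝ)) : (Fin ℓ → ℝ) × ℝ)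
          = (c, 0) + M • (e, 0) := by
        simp [Prod.ext_iff]
      rw [h7, map_add, _root_.map_smul, smul_eq_mul]
    have hLs : f (e, 0) ≤ 0 := by
      by_contra hpos
      push_neg at hpos
      have h1 : ∀ M : ℝ, 0 ≤ M → M * f (e, 0) ≤ (γ+ε)*s := by
        intro M hM
        have h8 := hfA _ (hMsets M hM)
        rw [hlin, hfb] at h8
        linarith
      set M := max 0 ((γ+ε)*s / f (e, 0) + 1) with hM
      have h2 := h1 M (le_max_left _ _)
      have h3 : M ≥ (γ+ε)*s / f (e, 0) + 1 := le_max_right _ _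
      have h4 : M ≤ (γ+ε)*s / f (e, 0) := (le_div_iff₀ hpos).2 h2
      linarith
    show 0 ≤ -(f (e, 0)) / s
    exact div_nonneg (neg_nonneg.2 hLs) hspos.le
  have key : ∀ P : FinPMF X, ALinfo α W cost lam P ≤ ((γ + ε - dotl lam c : ℝ) : EReal) := by
    intro P
    have hA2 : ∀ t : ℝ, (t:EReal) ≤ AInfo α W P →
        t ≤ γ + ε + dotl lam (epVec cost P) - dotl lam c := by
      intro t ht
      have hmem : ((epVec cost P, t) : (Fin ℓ → ℝ) × ℝ) ∈ A := ⟨P, fun i => le_rfl, ht⟩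
      have h6 := hfA _ hmem
      rw [hdec, hfb, hfL (epVec cost P), hfL c] at h6
      have h10 : t * s ≤ (γ + ε + dotl lam (epVec cost P) - dotl lam c) * s := by nlinarith
      exact le_of_mul_le_mul_right (by linarith [h10]) hspos
    have h9 := ereal_le_coe_of_forall hA2
    rw [ALinfo, epCost_dotl]
    calc AInfo α W P - ((dotl lam (epVec cost P) : ℝ) : EReal)
        ≤ ((γ + ε + dotl lam (epVec cost P) - dotl lam c : ℝ) : EReal)
            - ((dotl lam (epVec cost P) : ℝ) : EReal) := EReal.sub_le_sub h9 le_rfl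
      _ = ((γ + ε - dotl lam c : ℝ) : EReal) := by
          rw [← EReal.coe_sub]; congr 1; ring
  refine ⟨lam, hlamnn, ?_⟩
  rw [ALcap]
  refine le_trans (add_le_add_left (iSup_le key) _) ?_
  rw [← EReal.coe_add]
  exact EReal.coe_le_coe_iff.2 (le_of_eq (by ring))

end Chunk3


section Chunk4
variable {X : Type*} {Y : Type*} [MeasurableSpace Y]

lemma ereal_sub_coe_le_coe_iff {a : EReal} {u k : ℝ} :
    a - (u : EReal) ≤ (k : EReal) ↔ a ≤ ((k + u : ℝ) : EReal) := by
  induction a using EReal.rec with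
  | bot => simp
  | coe x => norm_cast; constructor <;> intro <;> linarith
  | top =>
    rw [EReal.top_sub_coe]
    simp only [top_le_iff]
    simp [← EReal.coe_add]
  
lemma isClosed_coe_ge (a : EReal) : IsClosed {r : ℝ | a ≤ (r : EReal)} := by
  induction a using EReal.rec with
  | bot =>
    have : {r : ℝ | (⊥ : EReal) ≤ (r : EReal)} = Set.univ := by ext r; simp
    rw [this]; exact isClosed_univ
  | coe x =>
    have : {r : ℝ | ((x:ℝ) : EReal) ≤ (r : EReal)} = Set.Ici x := by
      ext r; simp [EReal.coe_le_coe_iff]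
    rw [this]; exact isClosed_Ici
  | top =>
    have : {r : ℝ | (⊤ : EReal) ≤ (r : EReal)} = ∅ := by
      ext r; simp [top_le_iff]
    rw [this]; exact isClosed_empty

lemma continuous_dotl {ℓ : ℕ} (v : Fin ℓ → ℝ) :
    Continuous fun lam : Fin ℓ → ℝ => dotl lam v :=
  continuous_finset_sum _ fun i _ => (continuous_apply i).mul continuous_const

lemma continuous_epCost {ℓ : ℕ} (cost : X → Fin ℓ → ℝ) (P : FinPMF X) :
    Continuous fun lam : Fin ℓ → ℝ => epCost cost lam P :=
  continuous_finset_sum _ fun x _ => continuous_const.mul (continuous_dotl (cost x))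

lemma isClosed_nonneg_orthant {ℓ : ℕ} : IsClosed {lam : Fin ℓ → ℝ | ∀ i, 0 ≤ lam i} := by
  have : {lam : Fin ℓ → ℝ | ∀ i, 0 ≤ lam i} = ⋂ i, (fun lam : Fin ℓ → ℝ => lam i) ⁻¹' Set.Ici 0 := by
    ext lam; simp [Set.mem_iInter]
  rw [this]
  exact isClosed_iInter fun i => isClosed_Ici.preimage (continuous_apply i)

lemma isClosed_le_orthant {ℓ : ℕ} (K : ℝ) : IsClosed {lam : Fin ℓ → ℝ | ∀ i, lam i ≤ K} := by
  have : {lam : Fin ℓ → ℝ | ∀ i, lam i ≤ K} = ⋂ i, (fun lam : Fin ℓ → ℝ => lam i) ⁻¹' Set.Iic K := by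
    ext lam; simp [Set.mem_iInter]
  rw [this]
  exact isClosed_iInter fun i => isClosed_Iic.preimage (continuous_apply i)

lemma lamset_eq {ℓ : ℕ} (α : ℝ) (W : X → Measure Y) (cost : X → Fin ℓ → ℝ)
    (c : Fin ℓ → ℝ) (g : ℝ) :
    {lam : Fin ℓ → ℝ | ALcap α W cost lam + ((dotl lam c : ℝ) : EReal) ≤ ((g:ℝ) : EReal)}
      = ⋂ P : FinPMF X, (fun lam : Fin ℓ → ℝ => g - dotl lam c + epCost cost lam P) ⁻¹'
          {r : ℝ | AInfo α W P ≤ (r : EReal)} := by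
  ext lam
  simp only [Set.mem_iInter, Set.mem_preimage, Set.mem_setOf_eq]
  rw [ereal_add_coe_le_coe_iff, ALcap, iSup_le_iff]
  refine forall_congr' fun P => ?_
  rw [ALinfo, ereal_sub_coe_le_coe_iff]

lemma isClosed_lamset {ℓ : ℕ} (α : ℝ) (W : X → Measure Y) (cost : X → Fin ℓ → ℝ)
    (c : Fin ℓ → ℝ) (g : ℝ) :
    IsClosed {lam : Fin ℓ → ℝ | ALcap α W cost lam + ((dotl lam c : ℝ) : EReal)
      ≤ ((g:ℝ) : EReal)} := by
  rw [lamset_eq]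
  exact isClosed_iInter fun P => (isClosed_coe_ge _).preimage
    ((continuous_const.sub (continuous_dotl c)).add (continuous_epCost cost P))

lemma lam_bound {ℓ : ℕ} {α : ℝ} (hα : 0 < α) (W : X → Measure Y)
    [∀ x, IsProbabilityMeasure (W x)] (cost : X → Fin ℓ → ℝ)
    {c : Fin ℓ → ℝ} {δ γ η : ℝ} (hδ : 0 < δ)
    (hball : ∀ c' : Fin ℓ → ℝ, dist c' c < δ → ∃ P : FinPMF X, ∀ i, epVec cost P i ≤ c' i)
    {lam : Fin ℓ → ℝ} (hlam : ∀ i, 0 ≤ lam i)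
    (hle : ALcap α W cost lam + ((dotl lam c : ℝ) : EReal) ≤ ((γ + η : ℝ) : EReal)) :
    ∀ i, lam i ≤ (γ + η) / (δ/2) := by
  intro i
  set e : Fin ℓ → ℝ := Pi.single i 1 with he
  have he_nonneg : ∀ j, 0 ≤ e j := by
    intro j; rw [he, Pi.single_apply]; split_ifs <;> norm_num
  have he_le : ∀ j, e j ≤ 1 := by
    intro j; rw [he, Pi.single_apply]; split_ifs <;> norm_num
  have hei : e i = 1 := by rw [he]; exact Pi.single_eq_same i 1
  set c' : Fin ℓ → ℝ := c - (δ/2) • e with hc'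
  have hc'j : ∀ j, c' j = c j - (δ/2) * e j := by
    intro j; rw [hc', Pi.sub_apply, Pi.smul_apply, smul_eq_mul]
  have hd : dist c' c < δ := by
    rw [dist_pi_lt_iff hδ]
    intro j
    rw [Real.dist_eq, hc'j j]
    have h1 : (0:ℝ) ≤ (δ/2) * e j := mul_nonneg (by linarith) (he_nonneg j)
    have h2 : (δ/2) * e j ≤ δ/2 := by
      calc (δ/2) * e j ≤ (δ/2) * 1 := mul_le_mul_of_nonneg_left (he_le j) (by linarith)
        _ = δ/2 := mul_one _
    rw [show c j - δ/2 * e j - c j = -((δ/2) * e j) by ring, abs_neg, abs_of_nonneg h1]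
    linarith
  obtain ⟨P₁, hP₁⟩ := hball c' hd
  have h1 : ALinfo α W cost lam P₁ + ((dotl lam c : ℝ) : EReal) ≤ ((γ+η : ℝ) : EReal) :=
    le_trans (add_le_add_left (le_iSup _ P₁) _) hle
  rw [ALinfo, epCost_dotl, ereal_sub_add_le_coe_iff] at h1
  have h2 := le_trans (AInfo_nonneg hα W P₁) h1
  have h3 : (0:ℝ) ≤ γ + η - dotl lam c + dotl lam (epVec cost P₁) := by exact_mod_cast h2
  have h4 : lam i * (δ/2) ≤ dotl lam c - dotl lam (epVec cost P₁) := by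
    rw [← dotl_sub, dotl]
    have h6 : ∀ j, 0 ≤ lam j * (c - epVec cost P₁) j := by
      intro j
      refine mul_nonneg (hlam j) ?_
      have h7 := hP₁ j
      rw [hc'j j] at h7
      have h8 : (0:ℝ) ≤ (δ/2) * e j := mul_nonneg (by linarith) (he_nonneg j)
      rw [Pi.sub_apply]
      linarith
    have h7 : lam i * (δ/2) ≤ lam i * (c - epVec cost P₁) i := by
      refine mul_le_mul_of_nonneg_left ?_ (hlam i)
      have h9 := hP₁ i
      rw [hc'j i, hei, mul_one] at h9
      rw [Pi.sub_apply]
      linarith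
    exact le_trans h7 (Finset.single_le_sum (fun j _ => h6 j) (Finset.mem_univ i))
  have h8 : lam i * (δ/2) ≤ γ + η := by linarith
  exact (le_div_iff₀ (by linarith : (0:ℝ) < δ/2)).2 h8

end Chunk4

end Augustin

open Augustin in
/-- Lemma `Lcapacity`-(c): for cost constraints in the interior of
the feasible set, the cost constrained Augustin capacity is the Legendre transform of
the A-L capacity, and when finite the set of optimal Lagrange multipliers (which also
support the capacity as a function of the constraint) is nonempty, convex and compact. -/
theorem cost_constrained_capacity_duality
    {X Y : Type*} [MeasurableSpace Y] {ℓ : ℕ} (W : X → Measure Y)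
    [∀ x, IsProbabilityMeasure (W x)]
    (cost : X → Fin ℓ → ℝ) (hcost : ∀ x i, 0 ≤ cost x i)
    (α : ℝ) (hα : 0 < α) (c : Fin ℓ → ℝ)
    (hc : c ∈ interior {c' : Fin ℓ → ℝ |
      (∀ i, 0 ≤ c' i) ∧ ∃ P : FinPMF X, ∀ i, epVec cost P i ≤ c' i}) :
    costCap α W cost c =
        (⨅ lam ∈ {l : Fin ℓ → ℝ | ∀ i, 0 ≤ l i},
          (ALcap α W cost lam + ((dotl lam c : ℝ) : EReal))) ∧
      (costCap α W cost c ≠ ⊤ →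
        {lam : Fin ℓ → ℝ | (∀ i, 0 ≤ lam i) ∧
            costCap α W cost c = ALcap α W cost lam + ((dotl lam c : ℝ) : EReal) ∧
            ∀ c' : Fin ℓ → ℝ, (∀ i, 0 ≤ c' i) →
              costCap α W cost c' ≤
                costCap α W cost c + ((dotl lam (c' - c) : ℝ) : EReal)}.Nonempty ∧
          Convex ℝ {lam : Fin ℓ → ℝ | (∀ i, 0 ≤ lam i) ∧
            costCap α W cost c = ALcap α W cost lam + ((dotl lam c : ℝ) : EReal) ∧
            ∀ c' : Fin ℓ → ℝ, (∀ i, 0 ≤ c' i) →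
              costCap α W cost c' ≤
                costCap α W cost c + ((dotl lam (c' - c) : ℝ) : EReal)} ∧
          IsCompact {lam : Fin ℓ → ℝ | (∀ i, 0 ≤ lam i) ∧
            costCap α W cost c = ALcap α W cost lam + ((dotl lam c : ℝ) : EReal) ∧
            ∀ c' : Fin ℓ → ℝ, (∀ i, 0 ≤ c' i) →
              costCap α W cost c' ≤
                costCap α W cost c + ((dotl lam (c' - c) : ℝ) : EReal)}) := by
  classical
  have hcT : c ∈ {c' : Fin ℓ → ℝ |
      (∀ i, 0 ≤ c' i) ∧ ∃ P : FinPMF X, ∀ i, epVec cost P i ≤ c' i} := interior_subset hc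
  obtain ⟨hcnn, P₀, hP₀⟩ := hcT
  rw [mem_interior_iff_mem_nhds, Metric.mem_nhds_iff] at hc
  obtain ⟨δ, hδ, hball0⟩ := hc
  have hball : ∀ c' : Fin ℓ → ℝ, dist c' c < δ → ∃ P : FinPMF X, ∀ i, epVec cost P i ≤ c' i :=
    fun c' h => (hball0 (by rwa [Metric.mem_ball])).2
  have h0le : (0 : EReal) ≤ costCap α W cost c :=
    le_trans (AInfo_nonneg hα W P₀)
      (le_iSup₂ (f := fun (P : FinPMF X)
        (_ : P ∈ {P : FinPMF X | ∀ i, epVec cost P i ≤ c i}) => AInfo α W P) P₀ hP₀)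
  have hnb : costCap α W cost c ≠ ⊥ := by
    intro h
    rw [h] at h0le
    simp at h0le
  have part1 : costCap α W cost c = ⨅ lam ∈ {l : Fin ℓ → ℝ | ∀ i, 0 ≤ l i},
      (ALcap α W cost lam + ((dotl lam c : ℝ) : EReal)) := by
    refine le_antisymm (le_iInf₂ fun lam hlam => weak_duality W cost lam hlam c) ?_
    by_cases htop : costCap α W cost c = ⊤
    · rw [htop]; exact le_top
    · have hγ : costCap α W cost c = (((costCap α W cost c).toReal : ℝ) : EReal) :=
        (EReal.coe_toReal htop hnb).symm
      rw [hγ]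
      refine ereal_le_coe_of_forall_eps fun ε hε => ?_
      obtain ⟨lam, hlam, hle⟩ := strong_eps hα W cost hδ hball hγ ε hε
      exact le_trans (iInf₂_le lam hlam) hle
  refine ⟨part1, fun hfin => ?_⟩
  set γ : ℝ := (costCap α W cost c).toReal with hγdef
  have hγ : costCap α W cost c = (γ : EReal) := (EReal.coe_toReal hfin hnb).symm
  have hγ0 : 0 ≤ γ := by
    rw [hγ] at h0le
    exact_mod_cast h0le
  set S := {lam : Fin ℓ → ℝ | (∀ i, 0 ≤ lam i) ∧
      costCap α W cost c = ALcap α W cost lam + ((dotl lam c : ℝ) : EReal) ∧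
      ∀ c' : Fin ℓ → ℝ, (∀ i, 0 ≤ c' i) →
        costCap α W cost c' ≤
          costCap α W cost c + ((dotl lam (c' - c) : ℝ) : EReal)} with hSdef
  have hS1 : S = {lam : Fin ℓ → ℝ | (∀ i, 0 ≤ lam i) ∧
      ALcap α W cost lam + ((dotl lam c : ℝ) : EReal) ≤ (γ : EReal)} := by
    rw [hSdef]
    ext lam
    simp only [Set.mem_setOf_eq]
    constructor
    · rintro ⟨h1, h2, -⟩
      exact ⟨h1, le_of_eq (h2.symm.trans hγ)⟩
    · rintro ⟨h1, h2⟩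
      have heq : costCap α W cost c = ALcap α W cost lam + ((dotl lam c : ℝ) : EReal) :=
        le_antisymm (weak_duality W cost lam h1 c) (by rw [hγ]; exact h2)
      refine ⟨h1, heq, fun c' _ => ?_⟩
      calc costCap α W cost c'
          ≤ ALcap α W cost lam + ((dotl lam c' : ℝ) : EReal) := weak_duality W cost lam h1 c'
        _ = ALcap α W cost lam + ((dotl lam c : ℝ) : EReal)
              + ((dotl lam (c' - c) : ℝ) : EReal) := by
            rw [add_assoc, ← EReal.coe_add, dotl_sub,
              show dotl lam c + (dotl lam c' - dotl lam c) = dotl lam c' by ring]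
        _ = costCap α W cost c + ((dotl lam (c' - c) : ℝ) : EReal) := by rw [heq]
  have hS2 : S = {lam : Fin ℓ → ℝ | (∀ i, 0 ≤ lam i) ∧
      ∀ P : FinPMF X, AInfo α W P
        ≤ ((γ - dotl lam c + epCost cost lam P : ℝ) : EReal)} := by
    rw [hS1]
    ext lam
    simp only [Set.mem_setOf_eq]
    refine and_congr_right fun h1 => ?_
    rw [ereal_add_coe_le_coe_iff, ALcap, iSup_le_iff]
    refine forall_congr' fun P => ?_
    rw [ALinfo, ereal_sub_coe_le_coe_iff]
  have hKpos : (0:ℝ) < δ/2 := by linarith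
  set K : ℝ := (γ + 1)/(δ/2) with hK
  have hK0 : 0 ≤ K := div_nonneg (by linarith) hKpos.le
  set T : ℕ → Set (Fin ℓ → ℝ) := fun n => {lam | (∀ i, 0 ≤ lam i) ∧ (∀ i, lam i ≤ K) ∧
      ALcap α W cost lam + ((dotl lam c : ℝ) : EReal) ≤ ((γ + 1/(n+1) : ℝ) : EReal)} with hT
  have hTclosed : ∀ n, IsClosed (T n) := by
    intro n
    have : T n = ({lam : Fin ℓ → ℝ | ∀ i, 0 ≤ lam i} ∩ {lam | ∀ i, lam i ≤ K})
        ∩ {lam : Fin ℓ → ℝ | ALcap α W cost lam + ((dotl lam c : ℝ) : EReal)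
            ≤ ((γ + 1/(n+1) : ℝ) : EReal)} := by
      ext lam
      simp only [hT, Set.mem_setOf_eq, Set.mem_inter_iff]
      tauto
    rw [this]
    exact ((isClosed_nonneg_orthant.inter (isClosed_le_orthant K)).inter
      (isClosed_lamset α W cost c _))
  have hTnonempty : ∀ n, (T n).Nonempty := by
    intro n
    obtain ⟨lam, hlam, hle⟩ := strong_eps hα W cost hδ hball hγ (1/(n+1)) (by positivity)
    refine ⟨lam, hlam, fun i => ?_, hle⟩
    have hb := lam_bound hα W cost hδ hball hlam hle i
    refine le_trans hb ?_
    rw [hK, div_le_div_iff_of_pos_right hKpos]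
    have h1 : (1:ℝ)/(n+1) ≤ 1 := by
      rw [div_le_one (by positivity)]
      linarith [Nat.cast_nonneg (α := ℝ) n]
    linarith
  have hTmono : ∀ n, T (n+1) ⊆ T n := by
    rintro n lam ⟨h1, h2, h3⟩
    refine ⟨h1, h2, le_trans h3 (EReal.coe_le_coe_iff.2 ?_)⟩
    have h4 : (1:ℝ)/(n+1+1) ≤ 1/(n+1) := by
      rw [div_le_div_iff₀ (by positivity) (by positivity)]
      nlinarith [Nat.cast_nonneg (α := ℝ) n]
    push_cast
    push_cast at h4
    linarith
  have hTbdd : Bornology.IsBounded (T 0) := by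
    refine Bornology.IsBounded.subset (Metric.isBounded_closedBall (x := (0 : Fin ℓ → ℝ))
      (r := K)) ?_
    rintro lam ⟨h1, h2, -⟩
    rw [Metric.mem_closedBall, dist_pi_le_iff hK0]
    intro i
    rw [Real.dist_eq, Pi.zero_apply, sub_zero, abs_of_nonneg (h1 i)]
    exact h2 i
  have hTcompact : IsCompact (T 0) :=
    Metric.isCompact_of_isClosed_isBounded (hTclosed 0) hTbdd
  obtain ⟨lam₀, hlam₀⟩ := IsCompact.nonempty_iInter_of_sequence_nonempty_isCompact_isClosed
    T hTmono hTnonempty hTcompact hTclosed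
  have hmem : ∀ n : ℕ, lam₀ ∈ T n := Set.mem_iInter.1 hlam₀
  have hlam₀S : lam₀ ∈ S := by
    rw [hS1]
    refine ⟨(hmem 0).1, ?_⟩
    refine ereal_le_coe_of_forall_eps fun ε hε => ?_
    obtain ⟨n, hn⟩ := exists_nat_one_div_lt hε
    refine le_trans (hmem n).2.2 (EReal.coe_le_coe_iff.2 ?_)
    linarith
  have hconv : Convex ℝ S := by
    rw [hS2]
    rintro l₁ ⟨h1a, h1b⟩ l₂ ⟨h2a, h2b⟩ a b ha hb hab
    refine ⟨fun i => ?_, fun P => ?_⟩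
    · have : (a • l₁ + b • l₂) i = a * l₁ i + b * l₂ i := rfl
      rw [this]
      exact add_nonneg (mul_nonneg ha (h1a i)) (mul_nonneg hb (h2a i))
    · have hcombo : γ - dotl (a • l₁ + b • l₂) c + epCost cost (a • l₁ + b • l₂) P
          = a * (γ - dotl l₁ c + epCost cost l₁ P) + b * (γ - dotl l₂ c + epCost cost l₂ P) := by
        rw [dotl_smul_add, epCost_smul_add]
        linear_combination γ * hab.symm
      show AInfo α W P ≤ _
      rw [hcombo]
      rcases le_total (γ - dotl l₁ c + epCost cost l₁ P)
          (γ - dotl l₂ c + epCost cost l₂ P) with h | h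
      · refine le_trans (h1b P) (EReal.coe_le_coe_iff.2 ?_)
        have h5 := mul_le_mul_of_nonneg_left h hb
        have h6 : a * (γ - dotl l₁ c + epCost cost l₁ P)
            + b * (γ - dotl l₁ c + epCost cost l₁ P)
            = γ - dotl l₁ c + epCost cost l₁ P := by
          rw [← add_mul, hab, one_mul]
        linarith
      · refine le_trans (h2b P) (EReal.coe_le_coe_iff.2 ?_)
        have h5 := mul_le_mul_of_nonneg_left h ha
        have h6 : a * (γ - dotl l₂ c + epCost cost l₂ P)
            + b * (γ - dotl l₂ c + epCost cost l₂ P)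
            = γ - dotl l₂ c + epCost cost l₂ P := by
          rw [← add_mul, hab, one_mul]
        linarith
  have hScl : IsClosed S := by
    rw [hS1]
    have : {lam : Fin ℓ → ℝ | (∀ i, 0 ≤ lam i) ∧
        ALcap α W cost lam + ((dotl lam c : ℝ) : EReal) ≤ (γ : EReal)}
        = {lam : Fin ℓ → ℝ | ∀ i, 0 ≤ lam i}
          ∩ {lam : Fin ℓ → ℝ | ALcap α W cost lam + ((dotl lam c : ℝ) : EReal)
              ≤ ((γ : ℝ) : EReal)} := rfl
    rw [this]
    exact isClosed_nonneg_orthant.inter (isClosed_lamset α W cost c γ)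
  have hSbdd : Bornology.IsBounded S := by
    refine Bornology.IsBounded.subset (Metric.isBounded_closedBall (x := (0 : Fin ℓ → ℝ))
      (r := K)) ?_
    intro lam hlamS
    rw [hS1] at hlamS
    obtain ⟨h1, h2⟩ := hlamS
    have h2' : ALcap α W cost lam + ((dotl lam c : ℝ) : EReal) ≤ ((γ + 0 : ℝ) : EReal) := by
      rwa [add_zero]
    have hb := lam_bound hα W cost hδ hball h1 h2'
    rw [Metric.mem_closedBall, dist_pi_le_iff hK0]
    intro i
    rw [Real.dist_eq, Pi.zero_apply, sub_zero, abs_of_nonneg (h1 i)]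
    refine le_trans (hb i) ?_
    rw [hK, div_le_div_iff_of_pos_right hKpos]
    linarith
  exact ⟨⟨lam₀, hlam₀S⟩, hconv, Metric.isCompact_of_isClosed_isBounded hScl hSbdd⟩
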